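/- (Triangle inequality) In an innerproduct hyperspace V, setting ‖α‖ = √⟨α, α⟩, one has sup{‖x‖ : x ∈ α # β} ≤ ‖α‖ + ‖β‖ for all α, β ∈ V. -/

import Mathlib

/-- Hyperaddition of two sets: `A # B = ⋃_{a∈A, b∈B} a # b`. -/
def hSum {V : Type*} (hadd : V → V → Set V) (A B : Set V) : Set V :=
  ⋃ a ∈ A, ⋃ b ∈ B, hadd a b

/-- A commutative hypergroup. -/
structure CommHypergroup (V : Type*) where
  hadd : V → V → Set V
  hadd_nonempty : ∀ a b, (hadd a b).Nonempty
  hadd_comm : ∀ a b, hadd a b = hadd b a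
  hadd_assoc : ∀ a b c, hSum hadd {a} (hadd b c) = hSum hadd (hadd a b) {c}
  zero : V
  neg : V → V
  neg_spec : ∀ a, zero ∈ hadd a (neg a) ∧ zero ∈ hadd (neg a) a
  neg_unique : ∀ a b, zero ∈ hadd a b → zero ∈ hadd b a → b = neg a
  mem_shift : ∀ a b c, a ∈ hadd b c → b ∈ hadd a (neg c)

/-- A hyperfield: hyperaddition, ordinary multiplication. -/
structure Hyperfield (F : Type*) extends CommHypergroup F where
  mul : F → F → F
  mul_assoc' : ∀ a b c, mul (mul a b) c = mul a (mul b c)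
  mul_comm' : ∀ a b, mul a b = mul b a
  distrib : ∀ a b c, (mul a) '' (hadd b c) = hadd (mul a b) (mul a c)
  mul_zero' : ∀ a, mul a zero = zero
  one : F
  mul_one' : ∀ a, mul a one = a
  mul_inv' : ∀ a, a ≠ zero → ∃ b, mul a b = one

/-- A hypervector space over a hyperfield `K`. -/
structure HypVecSp (F : Type*) (K : Hyperfield F) (V : Type*) extends CommHypergroup V where
  smul : F → V → Set V
  smul_nonempty : ∀ a α, (smul a α).Nonempty
  smul_hadd : ∀ a α β, (⋃ x ∈ hadd α β, smul a x) ⊆ hSum hadd (smul a α) (smul a β)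
  hadd_smul : ∀ a b α, (⋃ c ∈ K.hadd a b, smul c α) ⊆ hSum hadd (smul a α) (smul b α)
  mul_smul' : ∀ a b α, smul (K.mul a b) α = ⋃ x ∈ smul b α, smul a x
  neg_smul' : ∀ a α, smul (K.neg a) α = smul a (neg α)
  one_smul' : ∀ α, α ∈ smul K.one α
  zero_smul' : ∀ α, zero ∈ smul K.zero α
  zero_smul_zero : smul K.zero zero = {zero}

/-- The hyper-linear combination `λ₁*α₁ # λ₂*α₂ # ⋯ # λₙ*αₙ` of a list of
scalar/vector pairs (the empty combination is `{θ}`, which is neutral for `#`). -/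
def combo {F V : Type*} (hadd : V → V → Set V) (smul : F → V → Set V) (z : V) :
    List (F × V) → Set V
  | [] => {z}
  | p :: l => hSum hadd (smul p.1 p.2) (combo hadd smul z l)

/-- The span of a set `A`: all vectors lying in some finite hyper-linear
combination of elements of `A`. -/
def hspan {F V : Type*} (hadd : V → V → Set V) (smul : F → V → Set V) (z : V)
    (A : Set V) : Set V :=
  {x | ∃ l : List (F × V), l ≠ [] ∧ (∀ p ∈ l, p.2 ∈ A) ∧ x ∈ combo hadd smul z l}

/-- The real hyperfield: a hyperfield structure on `ℝ` whose multiplication,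
zero and one are the usual ones. -/
structure RealHyperfield extends Hyperfield ℝ where
  zero_eq : zero = 0
  one_eq : one = 1
  mul_eq : ∀ a b, mul a b = a * b

/-- An innerproduct hyperspace over the real hyperfield. -/
structure InnerHyp (K : RealHyperfield) (V : Type*) extends
    HypVecSp ℝ K.toHyperfield V where
  inner : V → V → ℝ
  inner_pos : ∀ α, α ≠ zero → 0 < inner α α
  inner_self_eq_zero : ∀ α, inner α α = 0 ↔ α = zero
  inner_symm : ∀ α β, inner α β = inner β α
  sup_hadd : ∀ α β γ, IsLUB ((fun x => inner x γ) '' hadd α β) (inner α γ + inner β γ)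
  sup_smul : ∀ a α β, IsLUB ((fun x => inner x β) '' smul a α) (a * inner α β)

section Aux

variable {K : RealHyperfield} {V : Type*} (W : InnerHyp K V)

lemma aux_inner_zero_left (γ : V) : W.inner W.zero γ = 0 := by
  have h := W.sup_smul K.zero W.zero γ
  rw [W.zero_smul_zero, Set.image_singleton] at h
  have h2 := h.unique isLUB_singleton
  rw [K.zero_eq, zero_mul] at h2
  exact h2.symm

lemma aux_smul_le {a : ℝ} {α w : V} (γ : V) (hw : w ∈ W.smul a α) :
    W.inner w γ ≤ a * W.inner α γ :=
  (W.sup_smul a α γ).1 ⟨w, hw, rfl⟩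

lemma aux_hadd_le {α β x : V} (γ : V) (hx : x ∈ W.hadd α β) :
    W.inner x γ ≤ W.inner α γ + W.inner β γ :=
  (W.sup_hadd α β γ).1 ⟨x, hx, rfl⟩

lemma aux_inner_self_nonneg (x : V) : 0 ≤ W.inner x x := by
  by_cases h : x = W.zero
  · rw [(W.inner_self_eq_zero x).2 h]
  · exact (W.inner_pos x h).le

lemma aux_quad {a b c : ℝ} (ha : 0 ≤ a) (hc : 0 ≤ c)
    (h : ∀ t : ℝ, 0 ≤ t → 0 ≤ t ^ 2 * a + 2 * t * b + c) :
    -(Real.sqrt a * Real.sqrt c) ≤ b := by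
  have hs := Real.sqrt_nonneg a
  have hcs := Real.sqrt_nonneg c
  rcases le_or_gt 0 b with hb | hb
  · nlinarith
  · have hb0 : b ≠ 0 := ne_of_lt hb
    rcases eq_or_lt_of_le ha with ha0 | ha0
    · exfalso
      have ht := h ((c + 1) / (2 * -b)) (div_nonneg (by linarith) (by linarith))
      rw [← ha0] at ht
      have key : 2 * ((c + 1) / (2 * -b)) * b = -(c + 1) := by
        field_simp
      rw [key] at ht
      nlinarith [sq_nonneg ((c + 1) / (2 * -b))]
    · have ha' : a ≠ 0 := ne_of_gt ha0
      have ht := h (-b / a) (div_nonneg (by linarith) ha0.le)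
      have key : (-b / a) ^ 2 * a + 2 * (-b / a) * b + c = (a * c - b ^ 2) / a := by
        field_simp
        ring
      rw [key] at ht
      have h5 : 0 ≤ a * c - b ^ 2 := by
        have h6 := mul_nonneg ht ha0.le
        rwa [div_mul_cancel₀ _ ha'] at h6
      have hsq2 : b ^ 2 ≤ (Real.sqrt a * Real.sqrt c) ^ 2 := by
        rw [mul_pow, Real.sq_sqrt ha, Real.sq_sqrt hc]; linarith
      have h7 : -b ≤ Real.sqrt a * Real.sqrt c := by
        calc -b = |b| := (abs_of_neg hb).symm
        _ = Real.sqrt (b ^ 2) := (Real.sqrt_sq_eq_abs b).symm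
        _ ≤ Real.sqrt ((Real.sqrt a * Real.sqrt c) ^ 2) := Real.sqrt_le_sqrt hsq2
        _ = Real.sqrt a * Real.sqrt c := Real.sqrt_sq (mul_nonneg hs hcs)
      linarith

lemma aux_lower_cs (α β : V) :
    -(Real.sqrt (W.inner α α) * Real.sqrt (W.inner β β)) ≤ W.inner α β := by
  apply aux_quad (aux_inner_self_nonneg W α) (aux_inner_self_nonneg W β)
  intro t ht
  obtain ⟨w, hw⟩ := W.smul_nonempty t α
  obtain ⟨z, hz⟩ := W.hadd_nonempty w β
  have h0 := aux_inner_self_nonneg W z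
  have h1 := aux_hadd_le W z hz
  have h2 := aux_smul_le W z hw
  have h3 := aux_hadd_le W α hz
  have h4 := aux_smul_le W α hw
  have h5 := aux_hadd_le W β hz
  have h6 := aux_smul_le W β hw
  have s1 : W.inner α z = W.inner z α := W.inner_symm α z
  have s2 : W.inner β z = W.inner z β := W.inner_symm β z
  have s3 : W.inner β α = W.inner α β := W.inner_symm β α
  have h7 : W.inner α z ≤ t * W.inner α α + W.inner α β := by
    rw [s1]; rw [s3] at h3; linarith
  have h8 : t * W.inner α z ≤ t * (t * W.inner α α + W.inner α β) :=
    mul_le_mul_of_nonneg_left h7 ht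
  nlinarith

lemma aux_neg_neg (β : V) : W.neg (W.neg β) = β :=
  (W.neg_unique (W.neg β) β (W.neg_spec β).2 (W.neg_spec β).1).symm

/-- `K.neg t = t * K.neg 1` in the real hyperfield. -/
lemma aux_neg_eq (t : ℝ) : K.neg t = t * K.neg 1 := by
  set n := K.neg 1 with hn
  have h0 : (0 : ℝ) ∈ K.hadd 1 n := by
    have := (K.neg_spec 1).1
    rwa [K.zero_eq] at this
  have himg := K.distrib t 1 n
  have hmem : (0 : ℝ) ∈ K.hadd (K.mul t 1) (K.mul t n) := by
    rw [← himg]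
    refine ⟨0, h0, ?_⟩
    rw [K.mul_eq]; ring
  rw [K.mul_eq, K.mul_eq, mul_one] at hmem
  have hmem' : (0 : ℝ) ∈ K.hadd (t * n) t := by
    rw [K.hadd_comm]; exact hmem
  have := K.neg_unique t (t * n) (by rwa [K.zero_eq]) (by rwa [K.zero_eq])
  exact this.symm

lemma aux_neg_one_sq : K.neg 1 * K.neg 1 = 1 := by
  set n := K.neg 1 with hn
  have h0 : (0 : ℝ) ∈ K.hadd 1 n := by
    have := (K.neg_spec 1).1; rwa [K.zero_eq] at this
  have h1 : (0 : ℝ) ∈ K.hadd n 1 := by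
    have := (K.neg_spec 1).2; rwa [K.zero_eq] at this
  have e1 : (1 : ℝ) = K.neg n :=
    K.neg_unique n 1 (by rwa [K.zero_eq]) (by rwa [K.zero_eq])
  have himg := K.distrib n 1 n
  have hmem : (0 : ℝ) ∈ K.hadd (K.mul n 1) (K.mul n n) := by
    rw [← himg]
    refine ⟨0, h0, ?_⟩
    rw [K.mul_eq]; ring
  rw [K.mul_eq, K.mul_eq, mul_one] at hmem
  have hmem' : (0 : ℝ) ∈ K.hadd (n * n) n := by
    rw [K.hadd_comm]; exact hmem
  have e2 : n * n = K.neg n :=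
    K.neg_unique n (n * n) (by rwa [K.zero_eq]) (by rwa [K.zero_eq])
  rw [e2, ← e1]

end Aux

/-- Triangle inequality: `sup ‖α # β‖ ≤ ‖α‖ + ‖β‖` where `‖x‖ = √⟨x,x⟩`. -/
theorem sup_norm_hadd_le {K : RealHyperfield} {V : Type*} (W : InnerHyp K V)
    (α β : V) :
    ∀ x ∈ W.hadd α β,
      Real.sqrt (W.inner x x) ≤ Real.sqrt (W.inner α α) + Real.sqrt (W.inner β β) := by
  intro x hx
  rcases mul_self_eq_one_iff.1 (aux_neg_one_sq (K := K)) with hn1 | hn1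
  · -- degenerate case: `K.neg 1 = 1`, all inner products vanish
    have key : ∀ γ δ : V, W.inner γ δ = 0 := by
      intro γ δ
      have bound : ∀ t : ℝ, 0 ≤ t * W.inner γ δ + t * W.inner γ δ := by
        intro t
        have hc0 : (0 : ℝ) ∈ K.hadd t t := by
          have := (K.neg_spec t).1
          rw [K.zero_eq, aux_neg_eq t, hn1, mul_one] at this
          exact this
        have hz0 : W.zero ∈ W.smul (0 : ℝ) γ := by
          have := W.zero_smul' γ; rwa [K.zero_eq] at this
        have hmem : W.zero ∈ hSum W.hadd (W.smul t γ) (W.smul t γ) := by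
          apply W.hadd_smul t t γ
          exact Set.mem_biUnion hc0 hz0
        simp only [hSum, Set.mem_iUnion] at hmem
        obtain ⟨w, hw, w', hw', hz⟩ := hmem
        have h1 := aux_hadd_le W δ hz
        have h2 := aux_smul_le W δ hw
        have h3 := aux_smul_le W δ hw'
        have h4 := aux_inner_zero_left W δ
        linarith
      have b1 := bound 1
      have b2 := bound (-1)
      linarith
    rw [key x x, key α α, key β β, Real.sqrt_zero]
    norm_num
  · -- `K.neg 1 = -1`: the genuine case
    have hmemneg : ∀ β : V, W.neg β ∈ W.smul (K.neg 1) β := by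
      intro β
      have h1 := W.one_smul' (W.neg β)
      rw [← W.neg_smul' K.one β, K.one_eq] at h1
      exact h1
    have hneg_inner : ∀ β γ : V, W.inner (W.neg β) γ = -(W.inner β γ) := by
      intro β γ
      have hu : W.inner (W.neg β) γ ≤ -(W.inner β γ) := by
        have := aux_smul_le W γ (hmemneg β)
        rwa [hn1, neg_one_mul] at this
      have hl : W.inner W.zero γ ≤ W.inner β γ + W.inner (W.neg β) γ :=
        aux_hadd_le W γ (W.neg_spec β).1
      rw [aux_inner_zero_left] at hl
      linarith
    have cs : ∀ γ δ : V,
        W.inner γ δ ≤ Real.sqrt (W.inner γ γ) * Real.sqrt (W.inner δ δ) := by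
      intro γ δ
      have hnn : W.inner (W.neg δ) (W.neg δ) = W.inner δ δ := by
        rw [hneg_inner, W.inner_symm, hneg_inner]; ring
      have h := aux_lower_cs W γ (W.neg δ)
      rw [hnn] at h
      have h2 : W.inner γ (W.neg δ) = -(W.inner γ δ) := by
        rw [W.inner_symm, hneg_inner, W.inner_symm]
      rw [h2] at h
      linarith
    -- combine
    have h1 := aux_hadd_le W x hx
    have h2 := cs α x
    have h3 := cs β x
    have hxx := aux_inner_self_nonneg W x
    have hsq : Real.sqrt (W.inner x x) ^ 2 = W.inner x x := Real.sq_sqrt hxx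
    rcases eq_or_lt_of_le (Real.sqrt_nonneg (W.inner x x)) with h0 | h0
    · rw [← h0]
      positivity
    · nlinarith [Real.sqrt_nonneg (W.inner α α), Real.sqrt_nonneg (W.inner β β)]
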